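/- On S³ ⊂ ℝ⁴, the angle function f = g(X,Z) = -y₁² - x₁² + y₂² + x₂² between the Reeb fields Z = y₁∂x₁ - x₁∂y₁ + y₂∂x₂ - x₂∂y₂ and X = -y₁∂x₁ + x₁∂y₁ + y₂∂x₂ - x₂∂y₂ satisfies ‖∇f‖² = 4(1 - f²), where ∇f is the gradient on the round sphere; in particular f is transnormal. -/

import Mathlib

open scoped RealInnerProductSpace

noncomputable section

abbrev E4 := EuclideanSpace ℝ (Fin 4)

/-- The angle function `f = g(X,Z) = -x₁² - y₁² + x₂² + y₂²` of the two Reeb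
fields `Z = y₁∂x₁ - x₁∂y₁ + y₂∂x₂ - x₂∂y₂` and `X = -y₁∂x₁ + x₁∂y₁ + y₂∂x₂ - x₂∂y₂`
on `S³`, with coordinates `(x₁, y₁, x₂, y₂) = (p 0, p 1, p 2, p 3)`. -/
def angleF : E4 → ℝ := fun p => -(p 0) ^ 2 - (p 1) ^ 2 + (p 2) ^ 2 + (p 3) ^ 2

/-- The Riemannian gradient of (the restriction of) `f` on the unit sphere:
the ambient gradient projected onto the tangent space of the sphere. -/
def sphereGrad (f : E4 → ℝ) (p : E4) : E4 :=
  gradient f p - ⟪gradient f p, p⟫ • p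


theorem angleF_hasGradientAt (p : E4) : HasGradientAt angleF
    ((WithLp.equiv 2 (Fin 4 → ℝ)).symm ![-2*p 0, -2*p 1, 2*p 2, 2*p 3]) p := by
  have h := fun i : Fin 4 => (PiLp.proj (𝕜 := ℝ) 2 (fun _ : Fin 4 => ℝ) i).hasFDerivAt (x := p)
  have H := ((((h 0).mul (h 0)).neg.sub ((h 1).mul (h 1))).add ((h 2).mul (h 2))).add
    ((h 3).mul (h 3))
  have hfun : angleF = fun q : E4 =>
      -((PiLp.proj (𝕜 := ℝ) 2 (fun _ : Fin 4 => ℝ) (0:Fin 4)) q *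
        (PiLp.proj (𝕜 := ℝ) 2 (fun _ : Fin 4 => ℝ) (0:Fin 4)) q)
      - (PiLp.proj (𝕜 := ℝ) 2 (fun _ : Fin 4 => ℝ) (1:Fin 4)) q *
        (PiLp.proj (𝕜 := ℝ) 2 (fun _ : Fin 4 => ℝ) (1:Fin 4)) q
      + (PiLp.proj (𝕜 := ℝ) 2 (fun _ : Fin 4 => ℝ) (2:Fin 4)) q *
        (PiLp.proj (𝕜 := ℝ) 2 (fun _ : Fin 4 => ℝ) (2:Fin 4)) q
      + (PiLp.proj (𝕜 := ℝ) 2 (fun _ : Fin 4 => ℝ) (3:Fin 4)) q *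
        (PiLp.proj (𝕜 := ℝ) 2 (fun _ : Fin 4 => ℝ) (3:Fin 4)) q := by
    funext q; simp [angleF]; ring
  rw [hasGradientAt_iff_hasFDerivAt, hfun]
  convert H using 1
  · rfl
  · rfl
  · rfl
  ext v
  simp [InnerProductSpace.toDual_apply_apply, PiLp.inner_apply, Fin.sum_univ_four,
    WithLp.equiv_symm_apply, PiLp.toLp_apply]
  ring

/-- On `S³` with the round metric the angle function `f` satisfies
`‖∇f‖² = 4(1 - f²)`; in particular `f` is transnormal. -/
theorem sphere_angle_function_transnormal :
    ∀ p ∈ Metric.sphere (0 : E4) 1,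
      ‖sphereGrad angleF p‖ ^ 2 = 4 * (1 - angleF p ^ 2) := by
  intro p hp
  have hp1 : ‖p‖ = 1 := by simpa using hp
  have hps : p 0 * p 0 + p 1 * p 1 + p 2 * p 2 + p 3 * p 3 = 1 := by
    have h : ⟪p, p⟫ = 1 := by rw [real_inner_self_eq_norm_sq, hp1]; norm_num
    rw [PiLp.inner_apply] at h
    simpa [Fin.sum_univ_four, ← pow_two] using h
  have hgrad : gradient angleF p
      = (WithLp.equiv 2 (Fin 4 → ℝ)).symm ![-2*p 0, -2*p 1, 2*p 2, 2*p 3] :=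
    (angleF_hasGradientAt p).gradient
  rw [← real_inner_self_eq_norm_sq]
  simp only [sphereGrad, hgrad, PiLp.inner_apply, Fin.sum_univ_four,
    WithLp.equiv_symm_apply, PiLp.toLp_apply, PiLp.sub_apply, PiLp.smul_apply, smul_eq_mul,
    Matrix.cons_val_zero, Matrix.cons_val_one, Matrix.head_cons,
    Matrix.cons_val_two, Matrix.tail_cons, Matrix.cons_val_three,
    RCLike.inner_apply, conj_trivial, angleF]
  nlinarith [hps, sq_nonneg (p 0), sq_nonneg (p 1)]
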